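/- If the loss function ℓ(·, y) is λ-Lipschitz in its first argument for every y, then the Rademacher complexity of the loss class is bounded by λ times that of the function class: R_N(ℓ∘H) ≤ λ R_N(H). -/

import Mathlib

open Finset

lemma key_ineq {α : Type*} (s : Finset α) (hs : s.Nonempty)
    (t a : α → ℝ) (ψ : ℝ → ℝ) (hψ : ∀ u v, |ψ u - ψ v| ≤ |u - v|) :
    s.sup' hs (fun f => t f + ψ (a f)) + s.sup' hs (fun f => t f - ψ (a f))
      ≤ s.sup' hs (fun f => t f + a f) + s.sup' hs (fun f => t f - a f) := by
  obtain ⟨f1, hf1, h1⟩ := Finset.exists_mem_eq_sup' hs (fun f => t f + ψ (a f))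
  obtain ⟨f2, hf2, h2⟩ := Finset.exists_mem_eq_sup' hs (fun f => t f - ψ (a f))
  rw [h1, h2]
  rcases le_total (a f2) (a f1) with hle | hle
  · have hb := (abs_le.mp (hψ (a f1) (a f2))).2
    rw [abs_of_nonneg (sub_nonneg.mpr hle)] at hb
    have e1 := Finset.le_sup' (fun f => t f + a f) hf1
    have e2 := Finset.le_sup' (fun f => t f - a f) hf2
    linarith
  · have hb := (abs_le.mp (hψ (a f1) (a f2))).2
    rw [abs_of_nonpos (sub_nonpos.mpr hle), neg_sub] at hb
    have e1 := Finset.le_sup' (fun f => t f - a f) hf1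
    have e2 := Finset.le_sup' (fun f => t f + a f) hf2
    linarith

lemma sup'_const_mul {α : Type*} (s : Finset α) (hs : s.Nonempty) (c : ℝ) (hc : 0 ≤ c)
    (F : α → ℝ) : s.sup' hs (fun f => c * F f) = c * s.sup' hs F := by
  obtain ⟨f0, hf0, h0⟩ := Finset.exists_mem_eq_sup' hs F
  apply le_antisymm
  · exact Finset.sup'_le _ _ fun f hf =>
      mul_le_mul_of_nonneg_left (Finset.le_sup' F hf) hc
  · rw [h0]; exact Finset.le_sup' (fun f => c * F f) hf0
lemma single_step {X : Type*} (N : ℕ) (x : Fin N → X)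
    (H : Finset (X → ℝ)) (hH : H.Nonempty)
    (ψ : Fin N → ℝ → ℝ) (hψ : ∀ i u v, |ψ i u - ψ i v| ≤ |u - v|)
    (K : Finset (Fin N)) (k : Fin N) (hk : k ∉ K) :
    ∑ σ : Fin N → Bool, H.sup' hH (fun f => ∑ i, (if σ i then (1:ℝ) else -1) *
        (if i ∈ insert k K then ψ i (f (x i)) else f (x i)))
    ≤ ∑ σ : Fin N → Bool, H.sup' hH (fun f => ∑ i, (if σ i then (1:ℝ) else -1) *
        (if i ∈ K then ψ i (f (x i)) else f (x i))) := by
  classical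
  set A : (Fin N → Bool) → ℝ := fun σ => H.sup' hH (fun f => ∑ i, (if σ i then (1:ℝ) else -1) *
        (if i ∈ insert k K then ψ i (f (x i)) else f (x i))) with hA
  set B : (Fin N → Bool) → ℝ := fun σ => H.sup' hH (fun f => ∑ i, (if σ i then (1:ℝ) else -1) *
        (if i ∈ K then ψ i (f (x i)) else f (x i))) with hB
  set fl : (Fin N → Bool) → (Fin N → Bool) := fun σ => Function.update σ k (!σ k) with hfl
  have hinv : Function.Involutive fl := by
    intro σ; funext i
    by_cases h : i = k
    · subst h; simp [fl, Function.update_self]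
    · simp [fl, Function.update_of_ne h]
  have hflk : ∀ σ, fl σ k = !σ k := fun σ => by simp [fl]
  have hflne : ∀ σ i, i ≠ k → fl σ i = σ i := fun σ i h => by simp [fl, Function.update_of_ne h]
  have hsumA : ∑ σ : Fin N → Bool, A (fl σ) = ∑ σ : Fin N → Bool, A σ :=
    Fintype.sum_equiv (Function.Involutive.toPerm fl hinv) _ _ (fun σ => rfl)
  have hsumB : ∑ σ : Fin N → Bool, B (fl σ) = ∑ σ : Fin N → Bool, B σ :=
    Fintype.sum_equiv (Function.Involutive.toPerm fl hinv) _ _ (fun σ => rfl)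
  -- pointwise inequality
  have point : ∀ σ : Fin N → Bool, A σ + A (fl σ) ≤ B σ + B (fl σ) := by
    intro σ
    set tt : (X → ℝ) → ℝ := fun f => ∑ i ∈ univ.erase k, (if σ i then (1:ℝ) else -1) *
        (if i ∈ K then ψ i (f (x i)) else f (x i)) with htt
    -- generic sum-splitting for any σ' agreeing with σ off k
    have hsplit : ∀ (σ' : Fin N → Bool), (∀ i, i ≠ k → σ' i = σ i) → ∀ f : X → ℝ,
        (∑ i, (if σ' i then (1:ℝ) else -1) * (if i ∈ insert k K then ψ i (f (x i)) else f (x i)))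
          = tt f + (if σ' k then (1:ℝ) else -1) * ψ k (f (x k)) := by
      intro σ' hσ' f
      rw [← Finset.add_sum_erase _ _ (mem_univ k)]
      rw [add_comm]
      congr 1
      · apply Finset.sum_congr rfl
        intro i hi
        have hik : i ≠ k := (Finset.mem_erase.mp hi).1
        rw [hσ' i hik]
        congr 1
        simp [Finset.mem_insert, hik]
      · simp
    have hsplitK : ∀ (σ' : Fin N → Bool), (∀ i, i ≠ k → σ' i = σ i) → ∀ f : X → ℝ,
        (∑ i, (if σ' i then (1:ℝ) else -1) * (if i ∈ K then ψ i (f (x i)) else f (x i)))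
          = tt f + (if σ' k then (1:ℝ) else -1) * f (x k) := by
      intro σ' hσ' f
      rw [← Finset.add_sum_erase _ _ (mem_univ k)]
      rw [add_comm]
      congr 1
      · apply Finset.sum_congr rfl
        intro i hi
        have hik : i ≠ k := (Finset.mem_erase.mp hi).1
        rw [hσ' i hik]
      · simp [hk]
    have hself : ∀ i, i ≠ k → σ i = σ i := fun _ _ => rfl
    have hflσ : ∀ i, i ≠ k → fl σ i = σ i := fun i h => hflne σ i h
    cases hσk : σ k with
    | true =>
      have e1 : A σ = H.sup' hH (fun f => tt f + ψ k (f (x k))) := by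
        apply Finset.sup'_congr hH rfl
        intro f _
        rw [hsplit σ hself f, hσk]; norm_num; try ring
      have e2 : A (fl σ) = H.sup' hH (fun f => tt f - ψ k (f (x k))) := by
        apply Finset.sup'_congr hH rfl
        intro f _
        rw [hsplit (fl σ) hflσ f, hflk, hσk]; norm_num; try ring
      have e3 : B σ = H.sup' hH (fun f => tt f + f (x k)) := by
        apply Finset.sup'_congr hH rfl
        intro f _
        rw [hsplitK σ hself f, hσk]; norm_num; try ring
      have e4 : B (fl σ) = H.sup' hH (fun f => tt f - f (x k)) := by
        apply Finset.sup'_congr hH rfl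
        intro f _
        rw [hsplitK (fl σ) hflσ f, hflk, hσk]; norm_num; try ring
      rw [e1, e2, e3, e4]
      exact key_ineq H hH tt (fun f => f (x k)) (ψ k) (hψ k)
    | false =>
      have e1 : A σ = H.sup' hH (fun f => tt f - ψ k (f (x k))) := by
        apply Finset.sup'_congr hH rfl
        intro f _
        rw [hsplit σ hself f, hσk]; norm_num; try ring
      have e2 : A (fl σ) = H.sup' hH (fun f => tt f + ψ k (f (x k))) := by
        apply Finset.sup'_congr hH rfl
        intro f _
        rw [hsplit (fl σ) hflσ f, hflk, hσk]; norm_num; try ring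
      have e3 : B σ = H.sup' hH (fun f => tt f - f (x k)) := by
        apply Finset.sup'_congr hH rfl
        intro f _
        rw [hsplitK σ hself f, hσk]; norm_num; try ring
      have e4 : B (fl σ) = H.sup' hH (fun f => tt f + f (x k)) := by
        apply Finset.sup'_congr hH rfl
        intro f _
        rw [hsplitK (fl σ) hflσ f, hflk, hσk]; norm_num; try ring
      rw [e1, e2, e3, e4]
      have := key_ineq H hH tt (fun f => f (x k)) (ψ k) (hψ k)
      linarith
  have hsum := Finset.sum_le_sum (fun σ (_ : σ ∈ (univ : Finset (Fin N → Bool))) => point σ)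
  rw [Finset.sum_add_distrib, Finset.sum_add_distrib, hsumA, hsumB] at hsum
  linarith

lemma contraction_all {X : Type*} (N : ℕ) (x : Fin N → X)
    (H : Finset (X → ℝ)) (hH : H.Nonempty)
    (ψ : Fin N → ℝ → ℝ) (hψ : ∀ i u v, |ψ i u - ψ i v| ≤ |u - v|) (K : Finset (Fin N)) :
    ∑ σ : Fin N → Bool, H.sup' hH (fun f => ∑ i, (if σ i then (1:ℝ) else -1) *
        (if i ∈ K then ψ i (f (x i)) else f (x i)))
    ≤ ∑ σ : Fin N → Bool, H.sup' hH (fun f => ∑ i, (if σ i then (1:ℝ) else -1) * f (x i)) := by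
  classical
  induction K using Finset.induction_on with
  | empty => simp
  | insert a s hk ih =>
      exact le_trans (single_step N x H hH ψ hψ _ _ hk) ih

/-- Talagrand's contraction lemma: if each `φ i` is `λ`-Lipschitz with `φ i 0 = 0`, then
`R_N(φ∘H) ≤ λ R_N(H)` for a nonempty finite class `H` and fixed samples `x`. -/
theorem stmt_4 {X : Type*} (N : ℕ) (hN : 0 < N) (x : Fin N → X)
    (H : Finset (X → ℝ)) (hH : H.Nonempty)
    (φ : Fin N → ℝ → ℝ) (lam : ℝ) (hlam : 0 ≤ lam)
    (hLip : ∀ i u v, |φ i u - φ i v| ≤ lam * |u - v|)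
    (h0 : ∀ i, φ i 0 = 0) :
    (1 / 2 ^ N : ℝ) * ∑ σ : Fin N → Bool,
        H.sup' hH (fun f => (1 / N : ℝ) * ∑ i, (if σ i then (1 : ℝ) else -1) * φ i (f (x i)))
    ≤ lam * ((1 / 2 ^ N : ℝ) * ∑ σ : Fin N → Bool,
        H.sup' hH (fun f => (1 / N : ℝ) * ∑ i, (if σ i then (1 : ℝ) else -1) * f (x i))) := by
  have hNinv : (0:ℝ) ≤ 1 / N := by positivity
  have e1 : ∀ σ : Fin N → Bool,
      H.sup' hH (fun f => (1 / N : ℝ) * ∑ i, (if σ i then (1 : ℝ) else -1) * φ i (f (x i)))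
      = (1 / N : ℝ) * H.sup' hH (fun f => ∑ i, (if σ i then (1 : ℝ) else -1) * φ i (f (x i))) :=
    fun σ => sup'_const_mul H hH _ hNinv _
  have e2 : ∀ σ : Fin N → Bool,
      H.sup' hH (fun f => (1 / N : ℝ) * ∑ i, (if σ i then (1 : ℝ) else -1) * f (x i))
      = (1 / N : ℝ) * H.sup' hH (fun f => ∑ i, (if σ i then (1 : ℝ) else -1) * f (x i)) :=
    fun σ => sup'_const_mul H hH _ hNinv _
  simp only [e1, e2, ← Finset.mul_sum]
  have key : (∑ σ : Fin N → Bool,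
        H.sup' hH (fun f => ∑ i, (if σ i then (1 : ℝ) else -1) * φ i (f (x i))))
      ≤ lam * ∑ σ : Fin N → Bool,
        H.sup' hH (fun f => ∑ i, (if σ i then (1 : ℝ) else -1) * f (x i)) := by
    rcases eq_or_lt_of_le hlam with heq | hpos
    · have hz : ∀ i u, φ i u = 0 := by
        intro i u
        have := hLip i u 0
        rw [h0 i, sub_zero, ← heq, zero_mul] at this
        exact abs_eq_zero.mp (le_antisymm this (abs_nonneg _))
      simp [hz, ← heq]
    · set ψ : Fin N → ℝ → ℝ := fun i u => φ i u / lam with hψdef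
      have hψ : ∀ i u v, |ψ i u - ψ i v| ≤ |u - v| := by
        intro i u v
        rw [hψdef]
        simp only [div_sub_div_same]
        rw [abs_div, abs_of_pos hpos, div_le_iff₀ hpos]
        calc |φ i u - φ i v| ≤ lam * |u - v| := hLip i u v
          _ = |u - v| * lam := by ring
      have hφψ : ∀ i u, φ i u = lam * ψ i u := by
        intro i u; rw [hψdef]; field_simp
      have e3 : ∀ σ : Fin N → Bool,
          H.sup' hH (fun f => ∑ i, (if σ i then (1 : ℝ) else -1) * φ i (f (x i)))
          = lam * H.sup' hH (fun f => ∑ i, (if σ i then (1 : ℝ) else -1) * ψ i (f (x i))) := by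
        intro σ
        rw [← sup'_const_mul H hH lam hlam]
        apply Finset.sup'_congr hH rfl
        intro f _
        rw [Finset.mul_sum]
        apply Finset.sum_congr rfl
        intro i _
        rw [hφψ]; ring
      simp only [e3, ← Finset.mul_sum]
      apply mul_le_mul_of_nonneg_left _ hlam
      have := contraction_all N x H hH ψ hψ Finset.univ
      simpa using this
  calc (1 / 2 ^ N : ℝ) * ((1 / N : ℝ) * ∑ σ : Fin N → Bool,
        H.sup' hH (fun f => ∑ i, (if σ i then (1 : ℝ) else -1) * φ i (f (x i))))
      = ((1 / 2 ^ N : ℝ) * (1 / N : ℝ)) * ∑ σ : Fin N → Bool,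
        H.sup' hH (fun f => ∑ i, (if σ i then (1 : ℝ) else -1) * φ i (f (x i))) := by ring
    _ ≤ ((1 / 2 ^ N : ℝ) * (1 / N : ℝ)) * (lam * ∑ σ : Fin N → Bool,
        H.sup' hH (fun f => ∑ i, (if σ i then (1 : ℝ) else -1) * f (x i))) := by
        apply mul_le_mul_of_nonneg_left key (by positivity)
    _ = lam * ((1 / 2 ^ N : ℝ) * ((1 / N : ℝ) * ∑ σ : Fin N → Bool,
        H.sup' hH (fun f => ∑ i, (if σ i then (1 : ℝ) else -1) * f (x i)))) := by ring
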